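/- Let (X,d) be an ultrametric space generated by a labeled tree T₁(l₁) (so X = V(T₁), d = d_{l₁}) and let F : X → X be a bijection. Then F is a self-isometry of (X,d) if and only if there exists a labeled tree T₂(l₂) with V(T₂) = X, d = d_{l₂}, such that F is an isomorphism of labeled trees T₁(l₁) and T₂(l₂). -/

import Mathlib

open Classical in
noncomputable def treeDist {V : Type*} (T : SimpleGraph V) (hT : T.IsTree)
    (l : V → NNReal) (u v : V) : NNReal :=
  if u = v then 0
  else (((hT.existsUnique_path u v).choose).support.map l).foldr max 0

lemma isTree_of_iso {X : Type*} {T₁ T₂ : SimpleGraph X} (e : T₁ ≃g T₂)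
    (hT₁ : T₁.IsTree) : T₂.IsTree := by
  constructor
  · exact e.connected_iff.mp hT₁.isConnected
  · intro v c hc
    exact hT₁.IsAcyclic (c.map e.symm.toHom) (hc.map e.symm.injective)

lemma treeDist_iso {X : Type*} {T₁ T₂ : SimpleGraph X} (hT₁ : T₁.IsTree) (hT₂ : T₂.IsTree)
    {l₁ l₂ : X → NNReal} (F : X ≃ X)
    (hAdj : ∀ u v, T₁.Adj u v ↔ T₂.Adj (F u) (F v))
    (hl : ∀ v, l₂ (F v) = l₁ v) (u v : X) :
    treeDist T₂ hT₂ l₂ (F u) (F v) = treeDist T₁ hT₁ l₁ u v := by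
  classical
  unfold treeDist
  by_cases h : u = v
  · simp [h]
  · rw [if_neg h, if_neg (fun hh => h (F.injective hh))]
    set e : T₁ ≃g T₂ := ⟨F, fun {a b} => (hAdj a b).symm⟩ with he
    set p := (hT₁.existsUnique_path u v).choose with hp
    have hpPath : p.IsPath := (hT₁.existsUnique_path u v).choose_spec.1
    have hqPath : (p.map e.toHom).IsPath :=
      SimpleGraph.Walk.map_isPath_of_injective F.injective hpPath
    have hq : (hT₂.existsUnique_path (F u) (F v)).choose = p.map e.toHom :=
      (hT₂.existsUnique_path (F u) (F v)).unique
        (hT₂.existsUnique_path (F u) (F v)).choose_spec.1 hqPath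
    rw [hq, SimpleGraph.Walk.support_map, List.map_map]
    congr 1
    exact List.map_congr_left fun a _ => hl a

theorem stmt13 {X : Type*} (d : X → X → NNReal)
    (T₁ : SimpleGraph X) (hT₁ : T₁.IsTree) (l₁ : X → NNReal)
    (hgen : ∀ u v, d u v = treeDist T₁ hT₁ l₁ u v)
    (F : X ≃ X) :
    (∀ x y : X, d (F x) (F y) = d x y) ↔
      ∃ (T₂ : SimpleGraph X) (hT₂ : T₂.IsTree) (l₂ : X → NNReal),
        (∀ u v, d u v = treeDist T₂ hT₂ l₂ u v) ∧
          (∀ u v : X, T₁.Adj u v ↔ T₂.Adj (F u) (F v)) ∧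
            ∀ v : X, l₂ (F v) = l₁ v := by
  constructor
  · intro hiso
    set T₂ : SimpleGraph X :=
      { Adj := fun a b => T₁.Adj (F.symm a) (F.symm b),
        symm := ⟨fun a b (h : T₁.Adj (F.symm a) (F.symm b)) => h.symm⟩,
        loopless := ⟨fun a h => T₁.loopless.irrefl _ h⟩ } with hT2def
    have hAdj : ∀ u v, T₁.Adj u v ↔ T₂.Adj (F u) (F v) := by
      intro u v; simp [hT2def]
    have e : T₁ ≃g T₂ := ⟨F, fun {a b} => (hAdj a b).symm⟩
    have hT₂ : T₂.IsTree := isTree_of_iso e hT₁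
    refine ⟨T₂, hT₂, l₁ ∘ F.symm, ?_, hAdj, fun v => by simp⟩
    intro u v
    calc d u v = d (F.symm u) (F.symm v) := by
          rw [← hiso (F.symm u) (F.symm v)]; simp
      _ = treeDist T₁ hT₁ l₁ (F.symm u) (F.symm v) := hgen _ _
      _ = treeDist T₂ hT₂ (l₁ ∘ F.symm) (F (F.symm u)) (F (F.symm v)) :=
          (treeDist_iso hT₁ hT₂ F hAdj (fun w => by simp) (F.symm u) (F.symm v)).symm
      _ = treeDist T₂ hT₂ (l₁ ∘ F.symm) u v := by simp
  · rintro ⟨T₂, hT₂, l₂, hgen₂, hAdj, hl⟩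
    intro x y
    rw [hgen x y, hgen₂ (F x) (F y)]
    exact treeDist_iso hT₁ hT₂ F hAdj hl x y
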